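/- Let Υ ∈ (0,∞) and let φ : ℝ → [0,∞) be even and continuous with φ(u) > 0 for |u| < Υ, φ(u) = 0 for |u| ≥ Υ, and such that lim_{u→Υ⁻} φ(u)/(Υ − u)^{N₁} exists and is positive for some N₁ ≥ 2. Let κ₀ and τ_*(k), 0 ≤ |k| ≤ κ₀, be as constructed from the dispersion relation (τ_*(0) = √(2∫φ), and for 0 < |k| ≤ κ₀, τ_*(k) ≥ 2|k|Υ + |k|² is the unique solution of ∫ φ(u)/((τ_*(k)/2 − |k|u)² − |k|⁴/4) du = 2). For n ∈ {0,1} and m ≥ 0 define I_{n,m}(k) := ∫_{−Υ}^{Υ} (τ_*(k)/2 − |k|u)^n u^m φ(u) / ( (τ_*(k)/2 − |k|u)² − |k|⁴/4 )² du. Then all these integrals converge, and for every l ≥ 0 and n ∈ {0,1} there are positive constants c₀, C₀ (depending on l) such that c₀ ≤ I_{n,2l}(k) ≤ C₀ and c₀|k| ≤ I_{n,2l+1}(k) ≤ C₀|k| for all 0 ≤ |k| ≤ κ₀. -/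

import Mathlib

set_option maxHeartbeats 1000000

open MeasureTheory

/-- The integrals
`I_{n,m}(k) = ∫_{−Υ}^{Υ} (τ_*(k)/2 − |k|u)^n u^m φ(u) / ((τ_*(k)/2 − |k|u)² − |k|⁴/4)² du`,
expressed in the radial variable `r = |k|`. -/
noncomputable def Ifun (φ : ℝ → ℝ) (Υ : ℝ) (τstar : ℝ → ℝ) (n m : ℕ) (r : ℝ) : ℝ :=
  ∫ u in Set.Ioo (-Υ) Υ,
    (τstar r / 2 - r * u) ^ n * u ^ m * φ u /
      ((τstar r / 2 - r * u) ^ 2 - r ^ 4 / 4) ^ 2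

section Aux

lemma bddIntOn {f : ℝ → ℝ} {a b C : ℝ} (hm : Measurable f)
    (h : ∀ u ∈ Set.Ioo a b, |f u| ≤ C) : IntegrableOn f (Set.Ioo a b) := by
  refine Measure.integrableOn_of_bounded (M := C) measure_Ioo_lt_top.ne
    hm.aestronglyMeasurable ?_
  rw [ae_restrict_iff' measurableSet_Ioo]
  exact Filter.Eventually.of_forall fun u hu => by
    simpa [Real.norm_eq_abs] using h u hu

lemma integral_Ioo_le_const {f : ℝ → ℝ} {a b C : ℝ} (hab : a ≤ b)
    (hi : IntegrableOn f (Set.Ioo a b))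
    (h : ∀ u ∈ Set.Ioo a b, f u ≤ C) :
    ∫ u in Set.Ioo a b, f u ≤ C * (b - a) := by
  have h2 : ∫ u in Set.Ioo a b, f u ≤ ∫ _u in Set.Ioo a b, C :=
    setIntegral_mono_on hi (integrableOn_const measure_Ioo_lt_top.ne)
      measurableSet_Ioo h
  rw [setIntegral_const] at h2
  simpa [Real.volume_Ioo, ENNReal.toReal_ofReal (by linarith : (0:ℝ) ≤ b - a),
    max_eq_left (by linarith : (0:ℝ) ≤ b - a),
    smul_eq_mul, mul_comm] using h2

lemma const_le_integral_Ioo {f : ℝ → ℝ} {a b c : ℝ} (hab : a ≤ b)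
    (hi : IntegrableOn f (Set.Ioo a b))
    (h : ∀ u ∈ Set.Ioo a b, c ≤ f u) :
    c * (b - a) ≤ ∫ u in Set.Ioo a b, f u := by
  have h2 : ∫ _u in Set.Ioo a b, c ≤ ∫ u in Set.Ioo a b, f u :=
    setIntegral_mono_on (integrableOn_const measure_Ioo_lt_top.ne) hi
      measurableSet_Ioo h
  rw [setIntegral_const] at h2
  simpa [Real.volume_Ioo, ENNReal.toReal_ofReal (by linarith : (0:ℝ) ≤ b - a),
    max_eq_left (by linarith : (0:ℝ) ≤ b - a),
    smul_eq_mul, mul_comm] using h2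




lemma qlb0 {a r u α β : ℝ} (hα : 0 < α) (hβ : 0 < β) (haα : α ≤ a)
    (hDp0 : 0 ≤ (a - r*u)^2 - r^4/4) (hDm : β*α ≤ (a + r*u)^2 - r^4/4) :
    2*α*(β*α) ≤ 2*a*((a - r*u)^2 + (a + r*u)^2 - r^4/2) := by
  nlinarith [mul_le_mul (by linarith : 2*α ≤ 2*a)
    (by linarith : β*α ≤ ((a - r*u)^2 - r^4/4) + ((a + r*u)^2 - r^4/4))
    (by positivity) (by linarith : (0:ℝ) ≤ 2*a)]

lemma qub0 {a r u B : ℝ} (hB : 0 < B) (haB : a ≤ B) (ha0 : 0 ≤ a)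
    (hDp0 : 0 ≤ (a - r*u)^2 - r^4/4) (hDm0 : 0 ≤ (a + r*u)^2 - r^4/4)
    (hDpB : (a - r*u)^2 - r^4/4 ≤ B^2) (hDmB : (a + r*u)^2 - r^4/4 ≤ B^2) :
    2*a*((a - r*u)^2 + (a + r*u)^2 - r^4/2) ≤ 4*B^3 + 3*B^4 := by
  nlinarith [mul_le_mul (by linarith : 2*a ≤ 2*B)
    (by linarith : ((a - r*u)^2 - r^4/4) + ((a + r*u)^2 - r^4/4) ≤ 2*B^2)
    (by linarith) (by linarith : (0:ℝ) ≤ 2*B), pow_pos hB 3, pow_pos hB 4]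

lemma qlb1 {a r u α β ξ : ℝ} (hα : 0 < α) (hβ : 0 < β) (hξ : 0 < ξ)
    (hs0 : (0:ℝ) ≤ r^2/2)
    (hxξ : ξ ≤ a - r*u) (hyα : α ≤ a + r*u)
    (hsx : r^2/2 ≤ a - r*u) (hsy : r^2/2 ≤ a + r*u)
    (hDm : β*α ≤ (a + r*u)^2 - r^4/4)
    (hDp0 : 0 ≤ (a - r*u)^2 - r^4/4)
    (hx0 : (0:ℝ) ≤ a - r*u) (hy0 : (0:ℝ) ≤ a + r*u) :
    ξ*α*(β*α) ≤ (a - r*u)*(a + r*u)*((a - r*u)^2 + (a - r*u)*(a + r*u) + (a + r*u)^2)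
          - 2*(r^4/4)*((a - r*u)*(a + r*u)) - (r^4/4)^2 := by
  have hxy : ξ*α ≤ (a - r*u)*(a + r*u) := mul_le_mul hxξ hyα hα.le hx0
  have hxy0 : (0:ℝ) ≤ (a - r*u)*(a + r*u) := mul_nonneg hx0 hy0
  have hxyc : r^4/4 ≤ (a - r*u)*(a + r*u) := by
    nlinarith [mul_le_mul hsx hsy hs0 hx0]
  have h1 : 0 ≤ ((a - r*u)*(a + r*u)) * ((a - r*u)^2 - r^4/4) :=
    mul_nonneg hxy0 hDp0
  have h2 : ξ*α*(β*α) ≤ ((a - r*u)*(a + r*u)) * ((a + r*u)^2 - r^4/4) :=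
    mul_le_mul hxy hDm (by positivity) hxy0
  have h3 : 0 ≤ ((a - r*u)*(a + r*u))^2 - (r^4/4)^2 := by
    nlinarith [mul_le_mul hxyc (le_refl ((a - r*u)*(a + r*u))) hxy0 hxy0,
      mul_le_mul_of_nonneg_left hxyc (by positivity : (0:ℝ) ≤ r^4/4)]
  nlinarith [h1, h2, h3]

lemma qub1 {a r u B : ℝ} (hB : 0 < B)
    (hxB : a - r*u ≤ B) (hyB : a + r*u ≤ B)
    (hx0 : (0:ℝ) ≤ a - r*u) (hy0 : (0:ℝ) ≤ a + r*u) :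
    (a - r*u)*(a + r*u)*((a - r*u)^2 + (a - r*u)*(a + r*u) + (a + r*u)^2)
          - 2*(r^4/4)*((a - r*u)*(a + r*u)) - (r^4/4)^2 ≤ 4*B^3 + 3*B^4 := by
  have hxy : (a - r*u)*(a + r*u) ≤ B^2 := by nlinarith [mul_le_mul hxB hyB hy0 hB.le]
  have hxy0 : (0:ℝ) ≤ (a - r*u)*(a + r*u) := mul_nonneg hx0 hy0
  have hsum : (a - r*u)^2 + (a - r*u)*(a + r*u) + (a + r*u)^2 ≤ 3*B^2 := by
    nlinarith [pow_le_pow_left₀ hx0 hxB 2, pow_le_pow_left₀ hy0 hyB 2]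
  have hsum0 : 0 ≤ (a - r*u)^2 + (a - r*u)*(a + r*u) + (a + r*u)^2 := by positivity
  nlinarith [mul_le_mul hxy hsum hsum0 (by positivity : (0:ℝ) ≤ B^2),
    mul_nonneg (by positivity : (0:ℝ) ≤ r^4/4) hxy0, sq_nonneg (r^4/4),
    pow_pos hB 3]

lemma idn0 (a r u p : ℝ) (m : ℕ) (hp : (a - r*u)^2 - r^4/4 ≠ 0)
    (hm : (a + r*u)^2 - r^4/4 ≠ 0) :
    -((a + r*u)^0 * u^m * p / ((a + r*u)^2 - r^4/4)^2)
      + (a - r*u)^0 * u^m * p / ((a - r*u)^2 - r^4/4)^2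
    = 2*r*u * (2*a*((a - r*u)^2 + (a + r*u)^2 - r^4/2)) * (u^m * p) /
      (((a - r*u)^2 - r^4/4)^2 * ((a + r*u)^2 - r^4/4)^2) := by
  rw [neg_add_eq_sub, div_sub_div _ _ (pow_ne_zero 2 hp) (pow_ne_zero 2 hm),
    div_eq_div_iff (mul_ne_zero (pow_ne_zero 2 hp) (pow_ne_zero 2 hm))
      (mul_ne_zero (pow_ne_zero 2 hp) (pow_ne_zero 2 hm))]
  ring

lemma idn1 (a r u p : ℝ) (m : ℕ) (hp : (a - r*u)^2 - r^4/4 ≠ 0)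
    (hm : (a + r*u)^2 - r^4/4 ≠ 0) :
    -((a + r*u)^1 * u^m * p / ((a + r*u)^2 - r^4/4)^2)
      + (a - r*u)^1 * u^m * p / ((a - r*u)^2 - r^4/4)^2
    = 2*r*u * ((a - r*u)*(a + r*u)*((a - r*u)^2 + (a - r*u)*(a + r*u) + (a + r*u)^2)
            - 2*(r^4/4)*((a - r*u)*(a + r*u)) - (r^4/4)^2) * (u^m * p) /
      (((a - r*u)^2 - r^4/4)^2 * ((a + r*u)^2 - r^4/4)^2) := by
  rw [neg_add_eq_sub, div_sub_div _ _ (pow_ne_zero 2 hp) (pow_ne_zero 2 hm),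
    div_eq_div_iff (mul_ne_zero (pow_ne_zero 2 hp) (pow_ne_zero 2 hm))
      (mul_ne_zero (pow_ne_zero 2 hp) (pow_ne_zero 2 hm))]
  ring


lemma aux_basic (a r u Υ α β ξ B : ℝ) (hr : 0 ≤ r) (hΥ : 0 < Υ)
    (hu0 : 0 ≤ u) (huΥ : u < Υ)
    (hα : 0 < α) (hβ : 0 < β) (hξ : 0 < ξ) (hB : 0 < B)
    (haα : α ≤ a) (haB : a + r*Υ ≤ B) (ha1 : r*Υ + r^2/2 ≤ a)
    (hξa : ξ ≤ a - r*Υ) (hβa : β ≤ a - r^2/2) :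
    (ξ ≤ a - r*u) ∧ (a - r*u ≤ B) ∧ (α ≤ a + r*u) ∧ (a + r*u ≤ B) ∧
    (r^2/2 ≤ a - r*u) ∧ (r^2/2 ≤ a + r*u) ∧
    (β*α ≤ (a + r*u)^2 - r^4/4) ∧ ((a + r*u)^2 - r^4/4 ≤ B^2) ∧
    ((a - r*u)^2 - r^4/4 ≤ B^2) ∧ (0 < (a - r*u)^2 - r^4/4) := by
  have hs0 : (0:ℝ) ≤ r^2/2 := by positivity
  have hru : 0 ≤ r*u := mul_nonneg hr hu0
  have hruΥ : r*u ≤ r*Υ := mul_le_mul_of_nonneg_left huΥ.le hr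
  have hxξ : ξ ≤ a - r*u := by linarith
  have hxB : a - r*u ≤ B := by linarith
  have hyα : α ≤ a + r*u := by linarith
  have hyB : a + r*u ≤ B := by linarith
  have hsx : r^2/2 ≤ a - r*u := by linarith
  have hsy : r^2/2 ≤ a + r*u := by linarith
  have hDm : β*α ≤ (a + r*u)^2 - r^4/4 := by
    nlinarith [mul_le_mul (show β ≤ (a + r*u) - r^2/2 by linarith)
      (show α ≤ (a + r*u) + r^2/2 by linarith) hα.le
      (by linarith : (0:ℝ) ≤ (a + r*u) - r^2/2)]
  have hDmB : (a + r*u)^2 - r^4/4 ≤ B^2 := by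
    nlinarith [pow_le_pow_left₀ (by linarith : (0:ℝ) ≤ a + r*u) hyB 2, sq_nonneg (r^2)]
  have hDpB : (a - r*u)^2 - r^4/4 ≤ B^2 := by
    nlinarith [pow_le_pow_left₀ (by linarith : (0:ℝ) ≤ a - r*u) hxB 2, sq_nonneg (r^2)]
  have hDp0 : 0 < (a - r*u)^2 - r^4/4 := by
    rcases eq_or_lt_of_le hr with hr0 | hr0
    · have hr' : r = 0 := hr0.symm
      subst hr'
      have ha' : ξ ≤ a - 0*u := hxξ
      nlinarith [hξ, ha']
    · have h1 : 0 < r*(Υ - u) := mul_pos hr0 (by linarith)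
      have h2 : r*(Υ - u) ≤ (a - r*u) - r^2/2 := by
        have : r*(Υ - u) = r*Υ - r*u := by ring
        rw [this]; linarith
      nlinarith [mul_pos (lt_of_lt_of_le h1 h2)
        (lt_of_lt_of_le hξ (by linarith : ξ ≤ (a - r*u) + r^2/2))]
  exact ⟨hxξ, hxB, hyα, hyB, hsx, hsy, hDm, hDmB, hDpB, hDp0⟩

lemma aux_pt (a r u Υ α β ξ B CH δ p : ℝ) (n m : ℕ) (hn : n ≤ 1)
    (hr : 0 ≤ r) (hΥ : 0 < Υ) (hu0 : 0 < u) (huΥ : u < Υ)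
    (hα : 0 < α) (hβ : 0 < β) (hξ : 0 < ξ) (hB : 0 < B) (hCH : 0 ≤ CH)
    (hδpos : 0 < δ)
    (haα : α ≤ a) (haB : a + r*Υ ≤ B) (ha1 : r*Υ + r^2/2 ≤ a)
    (hξa : ξ ≤ a - r*Υ) (hβa : β ≤ a - r^2/2)
    (hp : 0 ≤ p) (hpCH : p / ((a - r*u)^2 - r^4/4)^2 ≤ CH) :
    0 ≤ -((a + r*u)^n * u^m * p / ((a + r*u)^2 - r^4/4)^2)
        + (a - r*u)^n * u^m * p / ((a - r*u)^2 - r^4/4)^2 ∧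
    (-((a + r*u)^n * u^m * p / ((a + r*u)^2 - r^4/4)^2)
        + (a - r*u)^n * u^m * p / ((a - r*u)^2 - r^4/4)^2
      ≤ (2*Υ*(4*B^3+3*B^4)*Υ^m*CH/((β*α)^2)) * r) ∧
    (Υ/4 ≤ u → u ≤ Υ/2 → δ ≤ p →
      (2*(Υ/4)*(min (2*α*(β*α)) (ξ*α*(β*α)))*(Υ/4)^m*δ/(B^4*B^4)) * r
        ≤ -((a + r*u)^n * u^m * p / ((a + r*u)^2 - r^4/4)^2)
          + (a - r*u)^n * u^m * p / ((a - r*u)^2 - r^4/4)^2) := by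
  obtain ⟨hxξ, hxB, hyα, hyB, hsx, hsy, hDm, hDmB, hDpB, hDp0⟩ :=
    aux_basic a r u Υ α β ξ B hr hΥ hu0.le huΥ hα hβ hξ hB haα haB ha1 hξa hβa
  have hρpos : 0 < min (2*α*(β*α)) (ξ*α*(β*α)) := lt_min (by positivity) (by positivity)
  have hPpos : (0:ℝ) < 4*B^3 + 3*B^4 := by positivity
  have hDm0 : 0 < (a + r*u)^2 - r^4/4 := lt_of_lt_of_le (by positivity) hDm
  have hx0 : (0:ℝ) ≤ a - r*u := le_trans hξ.le hxξ
  have hy0 : (0:ℝ) ≤ a + r*u := le_trans hα.le hyα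
  have hDp4 : ((a - r*u)^2 - r^4/4)^2 ≤ B^4 := by
    calc ((a - r*u)^2 - r^4/4)^2 ≤ (B^2)^2 := pow_le_pow_left₀ hDp0.le hDpB 2
      _ = B^4 := by ring
  have hDm4 : ((a + r*u)^2 - r^4/4)^2 ≤ B^4 := by
    calc ((a + r*u)^2 - r^4/4)^2 ≤ (B^2)^2 := pow_le_pow_left₀ hDm0.le hDmB 2
      _ = B^4 := by ring
  have hDm4' : (β*α)^2 ≤ ((a + r*u)^2 - r^4/4)^2 := pow_le_pow_left₀ (by positivity) hDm 2
  have hmain : ∃ Q : ℝ, min (2*α*(β*α)) (ξ*α*(β*α)) ≤ Q ∧ Q ≤ 4*B^3 + 3*B^4 ∧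
      -((a + r*u)^n * u^m * p / ((a + r*u)^2 - r^4/4)^2)
        + (a - r*u)^n * u^m * p / ((a - r*u)^2 - r^4/4)^2
      = 2*r*u * Q * (u^m * p) /
        (((a - r*u)^2 - r^4/4)^2 * ((a + r*u)^2 - r^4/4)^2) := by
    interval_cases n
    · exact ⟨2*a*((a - r*u)^2 + (a + r*u)^2 - r^4/2),
        le_trans (min_le_left _ _) (qlb0 hα hβ haα hDp0.le hDm),
        qub0 hB (by linarith [mul_nonneg hr hΥ.le] : a ≤ B)
          (by linarith : (0:ℝ) ≤ a) hDp0.le hDm0.le hDpB hDmB,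
        idn0 a r u p m hDp0.ne' hDm0.ne'⟩
    · exact ⟨(a - r*u)*(a + r*u)*((a - r*u)^2 + (a - r*u)*(a + r*u) + (a + r*u)^2)
          - 2*(r^4/4)*((a - r*u)*(a + r*u)) - (r^4/4)^2,
        le_trans (min_le_right _ _)
          (qlb1 hα hβ hξ (by positivity) hxξ hyα hsx hsy hDm hDp0.le hx0 hy0),
        qub1 hB hxB hyB hx0 hy0,
        idn1 a r u p m hDp0.ne' hDm0.ne'⟩
  obtain ⟨Q, hQlb, hQub, hQeq⟩ := hmain
  have hQ0 : 0 ≤ Q := le_trans hρpos.le hQlb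
  have hum : 0 ≤ u^m := pow_nonneg hu0.le m
  have humΥ : u^m ≤ Υ^m := pow_le_pow_left₀ hu0.le huΥ.le m
  have hden0 : 0 < ((a - r*u)^2 - r^4/4)^2 * ((a + r*u)^2 - r^4/4)^2 := by positivity
  rw [hQeq]
  refine ⟨div_nonneg (by positivity) hden0.le, ?_, ?_⟩
  · have hsplit : 2*r*u * Q * (u^m * p) /
        (((a - r*u)^2 - r^4/4)^2 * ((a + r*u)^2 - r^4/4)^2)
        = (2*r*u * Q * u^m / ((a + r*u)^2 - r^4/4)^2) * (p / ((a - r*u)^2 - r^4/4)^2) := by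
      rw [div_mul_div_comm]
      ring
    rw [hsplit]
    have h1 : 2*r*u * Q * u^m / ((a + r*u)^2 - r^4/4)^2
        ≤ 2*r*Υ*(4*B^3 + 3*B^4)*Υ^m / (β*α)^2 := by
      apply div_le_div₀ (by positivity) ?_ (by positivity) hDm4'
      calc 2*r*u * Q * u^m ≤ 2*r*Υ * Q * u^m := by
            apply mul_le_mul_of_nonneg_right ?_ hum
            apply mul_le_mul_of_nonneg_right ?_ hQ0
            exact mul_le_mul_of_nonneg_left huΥ.le (by positivity)
        _ ≤ 2*r*Υ * (4*B^3 + 3*B^4) * u^m := by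
            apply mul_le_mul_of_nonneg_right ?_ hum
            exact mul_le_mul_of_nonneg_left hQub (by positivity)
        _ ≤ 2*r*Υ * (4*B^3 + 3*B^4) * Υ^m := mul_le_mul_of_nonneg_left humΥ (by positivity)
    calc (2*r*u * Q * u^m / ((a + r*u)^2 - r^4/4)^2) * (p / ((a - r*u)^2 - r^4/4)^2)
        ≤ (2*r*Υ*(4*B^3 + 3*B^4)*Υ^m / (β*α)^2) * CH := by
          apply mul_le_mul h1 hpCH (div_nonneg hp (by positivity)) (by positivity)
      _ = (2*Υ*(4*B^3+3*B^4)*Υ^m*CH/((β*α)^2)) * r := by ring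
  · intro h14 h12 hδp
    have humlb : (Υ/4)^m ≤ u^m := pow_le_pow_left₀ (by positivity) h14 m
    have hnumlb : 2*r*(Υ/4)*(min (2*α*(β*α)) (ξ*α*(β*α)))*((Υ/4)^m*δ)
        ≤ 2*r*u * Q * (u^m * p) := by
      have s1 : 2*r*(Υ/4) ≤ 2*r*u := mul_le_mul_of_nonneg_left h14 (by positivity)
      have s2 : 2*r*(Υ/4)*(min (2*α*(β*α)) (ξ*α*(β*α))) ≤ 2*r*u*Q :=
        mul_le_mul s1 hQlb hρpos.le (by positivity)
      have s3 : (Υ/4)^m*δ ≤ u^m * p := mul_le_mul humlb hδp hδpos.le hum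
      exact mul_le_mul s2 s3 (by positivity) (by positivity)
    have hdenub : ((a - r*u)^2 - r^4/4)^2 * ((a + r*u)^2 - r^4/4)^2 ≤ B^4*B^4 :=
      mul_le_mul hDp4 hDm4 (by positivity) (by positivity)
    calc (2*(Υ/4)*(min (2*α*(β*α)) (ξ*α*(β*α)))*(Υ/4)^m*δ/(B^4*B^4)) * r
        = 2*r*(Υ/4)*(min (2*α*(β*α)) (ξ*α*(β*α)))*((Υ/4)^m*δ) / (B^4*B^4) := by ring
      _ ≤ 2*r*u * Q * (u^m * p) /
          (((a - r*u)^2 - r^4/4)^2 * ((a + r*u)^2 - r^4/4)^2) :=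
          div_le_div₀ (by positivity) hnumlb hden0 hdenub

lemma aux_int (Υ : ℝ) (hΥ : 0 < Υ) (φ : ℝ → ℝ) (hpos : ∀ u, 0 ≤ φ u)
    (hm : Measurable φ)
    (a r ξ B CH : ℝ) (hξ : 0 < ξ) (hB : 0 < B) (hCH : 0 ≤ CH) (n m : ℕ)
    (hxlb : ∀ u, -Υ ≤ u → u ≤ Υ → ξ ≤ a - r*u)
    (hxub : ∀ u, -Υ ≤ u → u ≤ Υ → a - r*u ≤ B)
    (hCHb : ∀ u, -Υ ≤ u → u < Υ → φ u / ((a - r*u)^2 - r^4/4)^2 ≤ CH) :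
    IntegrableOn (fun u => (a - r*u)^n * u^m * φ u / ((a - r*u)^2 - r^4/4)^2)
      (Set.Ioo (-Υ) Υ) ∧
    ∀ u, -Υ ≤ u → u < Υ →
      |(a - r*u)^n * u^m * φ u / ((a - r*u)^2 - r^4/4)^2| ≤ B^n * Υ^m * CH := by
  have hbd : ∀ u, -Υ ≤ u → u < Υ →
      |(a - r*u)^n * u^m * φ u / ((a - r*u)^2 - r^4/4)^2| ≤ B^n * Υ^m * CH := by
    intro u h1 h2
    have hx0 : 0 ≤ a - r*u := (hξ.trans_le (hxlb u h1 h2.le)).le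
    have habs : |(a - r*u)^n * u^m * φ u / ((a - r*u)^2 - r^4/4)^2|
        = (a - r*u)^n * |u|^m * φ u / ((a - r*u)^2 - r^4/4)^2 := by
      rw [abs_div, abs_mul, abs_mul, abs_pow, abs_pow, abs_pow,
        abs_of_nonneg (hpos u), abs_of_nonneg hx0, sq_abs]
    rw [habs, mul_div_assoc]
    have h3 : (a - r*u)^n * |u|^m ≤ B^n * Υ^m := by
      apply mul_le_mul (pow_le_pow_left₀ hx0 (hxub u h1 h2.le) n)
        (pow_le_pow_left₀ (abs_nonneg u) (abs_le.2 ⟨h1, h2.le⟩) m)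
        (pow_nonneg (abs_nonneg u) m) (pow_nonneg hB.le n)
    calc (a - r*u)^n * |u|^m * (φ u / ((a - r*u)^2 - r^4/4)^2)
        ≤ B^n * Υ^m * CH := by
          apply mul_le_mul h3 (hCHb u h1 h2)
            (div_nonneg (hpos u) (by positivity))
            (by positivity)
      _ = B^n * Υ^m * CH := by ring
  refine ⟨?_, hbd⟩
  have hmeas : Measurable fun u =>
      (a - r*u)^n * u^m * φ u / ((a - r*u)^2 - r^4/4)^2 := by fun_prop
  exact bddIntOn hmeas fun u hu => hbd u hu.1.le hu.2

lemma aux_even (Υ : ℝ) (hΥ : 0 < Υ) (φ : ℝ → ℝ) (hpos : ∀ u, 0 ≤ φ u)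
    (a r ξ B CH δ : ℝ) (hξ : 0 < ξ) (hB : 0 < B) (hCH : 0 ≤ CH) (n : ℕ) (l : ℕ)
    (hxlb : ∀ u, -Υ ≤ u → u ≤ Υ → ξ ≤ a - r*u)
    (hxub : ∀ u, -Υ ≤ u → u ≤ Υ → a - r*u ≤ B)
    (hδ : ∀ u ∈ Set.Icc (Υ/4) (Υ/2), δ ≤ φ u) (hδpos : 0 < δ)
    (hDub : ∀ u, -Υ ≤ u → u ≤ Υ → (a - r*u)^2 - r^4/4 ≤ B^2)
    (hDlb : ∀ u, -Υ ≤ u → u ≤ Υ/2 → 0 < (a - r*u)^2 - r^4/4)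
    (hInt : IntegrableOn (fun u => (a - r*u)^n * u^(2*l) * φ u / ((a - r*u)^2 - r^4/4)^2)
      (Set.Ioo (-Υ) Υ))
    (hbd : ∀ u, -Υ ≤ u → u < Υ →
      |(a - r*u)^n * u^(2*l) * φ u / ((a - r*u)^2 - r^4/4)^2| ≤ B^n * Υ^(2*l) * CH) :
    ξ^n * (Υ/4)^(2*l) * δ / B^4 * (Υ/4)
      ≤ ∫ u in Set.Ioo (-Υ) Υ, (a - r*u)^n * u^(2*l) * φ u / ((a - r*u)^2 - r^4/4)^2 ∧
    (∫ u in Set.Ioo (-Υ) Υ, (a - r*u)^n * u^(2*l) * φ u / ((a - r*u)^2 - r^4/4)^2)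
      ≤ B^n * Υ^(2*l) * CH * (2*Υ) := by
  constructor
  · have h1 : ∫ u in Set.Ioo (Υ/4) (Υ/2), (a - r*u)^n * u^(2*l) * φ u / ((a - r*u)^2 - r^4/4)^2
        ≤ ∫ u in Set.Ioo (-Υ) Υ, (a - r*u)^n * u^(2*l) * φ u / ((a - r*u)^2 - r^4/4)^2 := by
      apply setIntegral_mono_set hInt
      · rw [Filter.EventuallyLE, ae_restrict_iff' measurableSet_Ioo]
        apply Filter.Eventually.of_forall
        intro u hu
        have hx0 : (0:ℝ) ≤ a - r*u := (hξ.trans_le (hxlb u hu.1.le hu.2.le)).le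
        have hu2 : (0:ℝ) ≤ u^(2*l) := by rw [pow_mul]; positivity
        exact div_nonneg (mul_nonneg (mul_nonneg (pow_nonneg hx0 n) hu2) (hpos u))
          (by positivity)
      · exact (Set.Ioo_subset_Ioo (by linarith) (by linarith)).eventuallyLE
    have h2 : ξ^n * (Υ/4)^(2*l) * δ / B^4 * (Υ/2 - Υ/4)
        ≤ ∫ u in Set.Ioo (Υ/4) (Υ/2), (a - r*u)^n * u^(2*l) * φ u / ((a - r*u)^2 - r^4/4)^2 := by
      apply const_le_integral_Ioo (by linarith)
        (hInt.mono_set (Set.Ioo_subset_Ioo (by linarith) (by linarith)))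
      intro u hu
      have hu1 : -Υ ≤ u := by linarith [hu.1]
      have hu2 : u ≤ Υ := by linarith [hu.2]
      have hx := hxlb u hu1 hu2
      have hx0 : (0:ℝ) ≤ a - r*u := le_trans hξ.le hx
      have hu0 : (0:ℝ) ≤ u := by linarith [hu.1, hΥ]
      have hnum0 : (0:ℝ) ≤ (a - r*u)^n * u^(2*l) * φ u :=
        mul_nonneg (mul_nonneg (pow_nonneg hx0 n) (pow_nonneg hu0 (2*l))) (hpos u)
      have hD0 := hDlb u hu1 hu.2.le
      have hDB := hDub u hu1 hu2
      have hnum : ξ^n * (Υ/4)^(2*l) * δ ≤ (a - r*u)^n * u^(2*l) * φ u := by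
        apply mul_le_mul
        · apply mul_le_mul (pow_le_pow_left₀ hξ.le hx n)
            (pow_le_pow_left₀ (by positivity) hu.1.le (2*l))
            (by positivity) (pow_nonneg (by linarith) n)
        · exact hδ u ⟨hu.1.le, hu.2.le⟩
        · exact hδpos.le
        · exact mul_nonneg (pow_nonneg hx0 n) (pow_nonneg hu0 (2*l))
      have hDD : ((a - r*u)^2 - r^4/4)^2 ≤ B^4 := by
        calc ((a - r*u)^2 - r^4/4)^2 ≤ (B^2)^2 := pow_le_pow_left₀ hD0.le hDB 2
          _ = B^4 := by ring
      exact div_le_div₀ hnum0 hnum (by positivity) hDD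
    calc ξ^n * (Υ/4)^(2*l) * δ / B^4 * (Υ/4)
        = ξ^n * (Υ/4)^(2*l) * δ / B^4 * (Υ/2 - Υ/4) := by ring
      _ ≤ _ := h2.trans h1
  · have := integral_Ioo_le_const (by linarith : -Υ ≤ Υ) hInt
      (fun u hu => (le_abs_self _).trans (hbd u hu.1.le hu.2))
    calc (∫ u in Set.Ioo (-Υ) Υ, (a - r*u)^n * u^(2*l) * φ u / ((a - r*u)^2 - r^4/4)^2)
        ≤ B^n * Υ^(2*l) * CH * (Υ - -Υ) := this
      _ = B^n * Υ^(2*l) * CH * (2*Υ) := by ring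

lemma aux_disp (Υ : ℝ) (hΥ : 0 < Υ) (φ : ℝ → ℝ) (hpos : ∀ u, 0 ≤ φ u)
    (hmφ : Measurable φ) (K₂ M : ℝ)
    (hK₂ : ∀ u, -Υ ≤ u → u ≤ Υ → φ u ≤ K₂ * (Υ - u)^2) (hK₂pos : 0 < K₂)
    (hφint : Integrable φ) (hMIoo : ∫ u in Set.Ioo (-Υ) Υ, φ u = M) (hM : 0 < M)
    (a r : ℝ) (hr : 0 < r) (ha1 : r*Υ + r^2/2 ≤ a)
    (heq : ∫ u in Set.Ioo (-Υ) Υ, φ u / ((a - r*u)^2 - r^4/4) = 2) :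
    M/2 ≤ (a + r*Υ)^2 ∧ (a - r*Υ)^2 - r^4/4 ≤ M/2 := by
  have harΥ : r^2/2 ≤ a - r*Υ := by linarith
  have haΥpos : 0 < a + r*Υ := by nlinarith [mul_pos hr hΥ]
  have hfact : ∀ u ∈ Set.Ioo (-Υ) Υ,
      0 < (a - r*u)^2 - r^4/4 ∧ r^3*(Υ-u) ≤ (a - r*u)^2 - r^4/4 ∧
      (a - r*u)^2 - r^4/4 ≤ (a + r*Υ)^2 := by
    intro u hu
    have h1 : r*u ≤ r*Υ := mul_le_mul_of_nonneg_left hu.2.le hr.le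
    have h1' : -(r*Υ) ≤ r*u := by nlinarith [mul_le_mul_of_nonneg_left hu.1.le hr.le]
    have hxs : r*(Υ-u) ≤ (a - r*u) - r^2/2 := by
      have : r*(Υ-u) = r*Υ - r*u := by ring
      rw [this]; linarith
    have hxspos : 0 < r*(Υ-u) := mul_pos hr (by linarith [hu.2])
    have hx2 : r^2 ≤ (a - r*u) + r^2/2 := by nlinarith
    constructor
    · nlinarith [mul_pos (lt_of_lt_of_le hxspos hxs)
        (lt_of_lt_of_le (by positivity : (0:ℝ) < r^2) hx2)]
    constructor
    · nlinarith [mul_le_mul hxs hx2 (by positivity) (by linarith [hxspos, hxs])]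
    · nlinarith [sq_nonneg (r^2)]
  have hgbd : ∀ u ∈ Set.Ioo (-Υ) Υ,
      φ u / ((a - r*u)^2 - r^4/4) ≤ 2*Υ*K₂/r^3 := by
    intro u hu
    obtain ⟨hD0, hD1, hD2⟩ := hfact u hu
    rw [div_le_iff₀ hD0]
    have e1 : (2*Υ*K₂/r^3) * (r^3*(Υ-u)) = 2*Υ*K₂*(Υ-u) := by
      field_simp
    have e2 : (2*Υ*K₂/r^3) * (r^3*(Υ-u)) ≤ (2*Υ*K₂/r^3) * ((a - r*u)^2 - r^4/4) :=
      mul_le_mul_of_nonneg_left hD1 (by positivity)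
    have e3 : φ u ≤ K₂*(Υ-u)^2 := hK₂ u hu.1.le hu.2.le
    nlinarith [hu.1, hu.2, e3, hK₂pos,
      mul_le_mul_of_nonneg_right (show Υ - u ≤ 2*Υ by linarith [hu.1])
        (show (0:ℝ) ≤ Υ - u by linarith [hu.2])]
  have hgint : IntegrableOn (fun u => φ u / ((a - r*u)^2 - r^4/4)) (Set.Ioo (-Υ) Υ) := by
    apply bddIntOn (C := 2*Υ*K₂/r^3) (by fun_prop)
    intro u hu
    rw [abs_of_nonneg (div_nonneg (hpos u) (hfact u hu).1.le)]
    exact hgbd u hu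
  constructor
  · have h1 : ∀ u ∈ Set.Ioo (-Υ) Υ,
        φ u / (a + r*Υ)^2 ≤ φ u / ((a - r*u)^2 - r^4/4) := fun u hu =>
      div_le_div_of_nonneg_left (hpos u) (hfact u hu).1 (hfact u hu).2.2
    have h2 := setIntegral_mono_on ((hφint.integrableOn).div_const _) hgint
      measurableSet_Ioo h1
    rw [integral_div, hMIoo, heq] at h2
    have h3 : M ≤ 2*(a + r*Υ)^2 := by
      rw [div_le_iff₀ (by positivity)] at h2
      linarith
    linarith
  · rcases le_or_gt ((a - r*Υ)^2 - r^4/4) 0 with h | h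
    · linarith
    · have h1 : ∀ u ∈ Set.Ioo (-Υ) Υ,
          φ u / ((a - r*u)^2 - r^4/4) ≤ φ u / ((a - r*Υ)^2 - r^4/4) := by
        intro u hu
        apply div_le_div_of_nonneg_left (hpos u) h
        have h1 : r*u ≤ r*Υ := mul_le_mul_of_nonneg_left hu.2.le hr.le
        nlinarith
      have h2 := setIntegral_mono_on hgint ((hφint.integrableOn).div_const _)
        measurableSet_Ioo h1
      rw [integral_div, hMIoo, heq] at h2
      rw [le_div_iff₀ h] at h2
      linarith

lemma aux_x (Υ a r ξ B K₂ Φmax : ℝ) (hΥ : 0 < Υ) (hξ : 0 < ξ) (hB : 0 < B)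
    (hK₂pos : 0 < K₂) (hΦpos : 0 < Φmax) (hr : 0 ≤ r)
    (ha1 : r*Υ + r^2/2 ≤ a) (hξa : ξ ≤ a - r*Υ) (haB : a + r*Υ ≤ B)
    (φ : ℝ → ℝ) (hpos : ∀ u, 0 ≤ φ u)
    (hΦ : ∀ u, -Υ ≤ u → u ≤ Υ → φ u ≤ Φmax)
    (hK₂ : ∀ u, -Υ ≤ u → u ≤ Υ → φ u ≤ K₂*(Υ-u)^2) :
    (∀ u, -Υ ≤ u → u ≤ Υ → ξ ≤ a - r*u) ∧
    (∀ u, -Υ ≤ u → u ≤ Υ → a - r*u ≤ B) ∧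
    (∀ u, -Υ ≤ u → u ≤ Υ → (a - r*u)^2 - r^4/4 ≤ B^2) ∧
    (∀ u, -Υ ≤ u → u ≤ Υ/2 → 0 < (a - r*u)^2 - r^4/4) ∧
    (∀ u, -Υ ≤ u → u < Υ →
      φ u / ((a - r*u)^2 - r^4/4)^2 ≤ max (4*Φmax/ξ^4) (K₂/ξ^3)) := by
  have hxlb : ∀ u, -Υ ≤ u → u ≤ Υ → ξ ≤ a - r*u := by
    intro u h1 h2
    have := mul_le_mul_of_nonneg_left h2 hr
    linarith
  have hxub : ∀ u, -Υ ≤ u → u ≤ Υ → a - r*u ≤ B := by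
    intro u h1 h2
    have h3 : -(r*Υ) ≤ r*u := by
      have := mul_le_mul_of_nonneg_left h1 hr
      nlinarith
    linarith
  have hDub : ∀ u, -Υ ≤ u → u ≤ Υ → (a - r*u)^2 - r^4/4 ≤ B^2 := by
    intro u h1 h2
    have h3 := hxlb u h1 h2
    have h4 := hxub u h1 h2
    nlinarith [sq_nonneg (r^2)]
  have hxs : ∀ u, u ≤ Υ → r*(Υ-u) ≤ (a - r*u) - r^2/2 := by
    intro u h2
    have : r*(Υ-u) = r*Υ - r*u := by ring
    rw [this]; linarith
  have hDcase : ∀ u, -Υ ≤ u → u < Υ →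
      (r^2/2 ≤ ξ/2 → ξ^2/2 ≤ (a - r*u)^2 - r^4/4) ∧
      (ξ/2 < r^2/2 → ξ^3*(Υ-u)^2 ≤ ((a - r*u)^2 - r^4/4)^2 ∧
        r*ξ*(Υ-u) ≤ (a - r*u)^2 - r^4/4) := by
    intro u h1 h2
    have hx := hxlb u h1 h2.le
    have hxs' := hxs u h2.le
    constructor
    · intro hc
      nlinarith [mul_le_mul (by linarith : ξ/2 ≤ (a - r*u) - r^2/2)
        (by linarith [sq_nonneg r] : ξ ≤ (a - r*u) + r^2/2) hξ.le
        (by linarith : (0:ℝ) ≤ (a - r*u) - r^2/2)]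
    · intro hc
      have hru : 0 < r := by nlinarith
      have hD1 : r*ξ*(Υ-u) ≤ (a - r*u)^2 - r^4/4 := by
        nlinarith [mul_le_mul hxs' (by linarith [sq_nonneg r] : ξ ≤ (a - r*u) + r^2/2)
          hξ.le (by linarith [mul_nonneg hr (by linarith : (0:ℝ) ≤ Υ - u)] :
            (0:ℝ) ≤ (a - r*u) - r^2/2)]
      refine ⟨?_, hD1⟩
      have hD1' : 0 ≤ r*ξ*(Υ-u) := by
        apply mul_nonneg (mul_nonneg hru.le hξ.le)
        linarith
      have h5 : (r*ξ*(Υ-u))^2 ≤ ((a - r*u)^2 - r^4/4)^2 := pow_le_pow_left₀ hD1' hD1 2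
      have h6 : ξ^3*(Υ-u)^2 ≤ (r*ξ*(Υ-u))^2 := by nlinarith [sq_nonneg (Υ - u), sq_nonneg r]
      linarith
  have hDlb : ∀ u, -Υ ≤ u → u ≤ Υ/2 → 0 < (a - r*u)^2 - r^4/4 := by
    intro u h1 h2
    have h2' : u < Υ := by linarith
    obtain ⟨hA, hB'⟩ := hDcase u h1 h2'
    rcases le_or_gt (r^2/2) (ξ/2) with hc | hc
    · have := hA hc
      nlinarith
    · have := (hB' hc).2
      have hru : 0 < r := by nlinarith
      have : 0 < r*ξ*(Υ-u) := by
        apply mul_pos (mul_pos hru hξ)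
        linarith
      linarith [(hB' hc).2]
  have hCHb : ∀ u, -Υ ≤ u → u < Υ →
      φ u / ((a - r*u)^2 - r^4/4)^2 ≤ max (4*Φmax/ξ^4) (K₂/ξ^3) := by
    intro u h1 h2
    obtain ⟨hA, hB'⟩ := hDcase u h1 h2
    rcases le_or_gt (r^2/2) (ξ/2) with hc | hc
    · refine le_trans ?_ (le_max_left _ _)
      have hD := hA hc
      have hD4 : (ξ^2/2)^2 ≤ ((a - r*u)^2 - r^4/4)^2 := pow_le_pow_left₀ (by positivity) hD 2
      calc φ u / ((a - r*u)^2 - r^4/4)^2 ≤ Φmax / (ξ^2/2)^2 :=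
            div_le_div₀ hΦpos.le (hΦ u h1 h2.le) (by positivity) hD4
        _ = 4*Φmax/ξ^4 := by
            rw [div_eq_div_iff (by positivity) (by positivity)]
            ring
    · refine le_trans ?_ (le_max_right _ _)
      have hD4 := (hB' hc).1
      have hΥu : (0:ℝ) < Υ - u := by linarith
      calc φ u / ((a - r*u)^2 - r^4/4)^2 ≤ (K₂*(Υ-u)^2) / (ξ^3*(Υ-u)^2) :=
            div_le_div₀ (by positivity) (hK₂ u h1 h2.le) (by positivity) hD4
        _ = K₂/ξ^3 := by
            rw [div_eq_div_iff (by positivity) (by positivity)]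
            ring
  exact ⟨hxlb, hxub, hDub, hDlb, hCHb⟩

lemma aux_consts (Υ M a r κ₀ : ℝ) (hΥ : 0 < Υ) (hM : 0 < M) (hr : 0 ≤ r)
    (hκ : r ≤ κ₀) (hκ₀ : 0 < κ₀)
    (hB0 : r*Υ + r^2/2 ≤ a) (hB1 : M/2 ≤ (a + r*Υ)^2)
    (hB2 : (a - r*Υ)^2 - r^4/4 ≤ M/2) :
    Real.sqrt (M/2)/2 ≤ a ∧
    a + r*Υ ≤ 2*κ₀*Υ + κ₀^2/2 + Real.sqrt (M/2) ∧
    min ((Real.sqrt (M/2)/2)/2) ((Real.sqrt (M/2)/2)^2/(8*Υ^2)) ≤ a - r*Υ ∧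
    min ((Real.sqrt (M/2)/2)/2) (Real.sqrt (Real.sqrt (M/2)/2) * Υ) ≤ a - r^2/2 := by
  set s2 := Real.sqrt (M/2) with hs2def
  have hs2pos : 0 < s2 := Real.sqrt_pos.2 (by linarith)
  have hs2sq : s2^2 = M/2 := Real.sq_sqrt (by linarith)
  set α := s2/2 with hαdef
  have hαpos : 0 < α := by positivity
  have hrΥ : 0 ≤ r*Υ := mul_nonneg hr hΥ.le
  have haΥpos : 0 ≤ a + r*Υ := by nlinarith
  -- a + rΥ ≥ s2
  have h1 : s2 ≤ a + r*Υ := by nlinarith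
  -- a ≥ α
  have haα : α ≤ a := by nlinarith
  -- a - rΥ ≤ r²/2 + s2
  have h2 : a - r*Υ ≤ r^2/2 + s2 := by nlinarith [sq_nonneg (r^2/2), sq_nonneg r]
  have haB : a + r*Υ ≤ 2*κ₀*Υ + κ₀^2/2 + s2 := by
    have hr2 : r^2 ≤ κ₀^2 := by nlinarith
    have hrΥ2 : r*Υ ≤ κ₀*Υ := by nlinarith
    linarith
  have hξa : min (α/2) (α^2/(8*Υ^2)) ≤ a - r*Υ := by
    rcases le_or_gt (r*Υ) (α/2) with hc | hc
    · refine le_trans (min_le_left _ _) ?_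
      linarith
    · refine le_trans (min_le_right _ _) ?_
      have hrpos : 0 < r := by
        rcases eq_or_lt_of_le hr with h | h
        · exfalso; rw [← h] at hc; simp at hc; linarith
        · exact h
      have h3 : α/(2*Υ) < r := by
        rw [div_lt_iff₀ (by linarith)]
        nlinarith
      have h4 : α^2/(8*Υ^2) ≤ r^2/2 := by
        rw [div_le_div_iff₀ (by positivity) (by norm_num)]
        nlinarith [mul_pos hrpos hΥ]
      linarith
  have hβa : min (α/2) (Real.sqrt α * Υ) ≤ a - r^2/2 := by
    rcases le_or_gt (r^2/2) (α/2) with hc | hc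
    · refine le_trans (min_le_left _ _) ?_
      linarith
    · refine le_trans (min_le_right _ _) ?_
      have h5 : Real.sqrt α < r := by
        have : Real.sqrt α < Real.sqrt (r^2) := by
          apply Real.sqrt_lt_sqrt hαpos.le
          linarith
        rwa [Real.sqrt_sq hr] at this
      have h6 : Real.sqrt α * Υ ≤ r * Υ := by
        apply mul_le_mul_of_nonneg_right h5.le hΥ.le
      linarith
  exact ⟨haα, haB, hξa, hβa⟩

lemma aux_odd (Υ : ℝ) (hΥ : 0 < Υ) (φ : ℝ → ℝ) (hpos : ∀ u, 0 ≤ φ u)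
    (heven : ∀ u, φ (-u) = φ u) (hm : Measurable φ)
    (a r α β ξ B CH δ : ℝ) (hr : 0 ≤ r)
    (hα : 0 < α) (hβ : 0 < β) (hξ : 0 < ξ) (hB : 0 < B) (hCH : 0 ≤ CH)
    (hδpos : 0 < δ)
    (n : ℕ) (hn : n ≤ 1) (l : ℕ)
    (haα : α ≤ a)
    (haB : a + r*Υ ≤ B)
    (ha1 : r*Υ + r^2/2 ≤ a)
    (hξa : ξ ≤ a - r*Υ)
    (hβa : β ≤ a - r^2/2)
    (hδ : ∀ u ∈ Set.Icc (Υ/4) (Υ/2), δ ≤ φ u)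
    (hCHb : ∀ u, -Υ ≤ u → u < Υ → φ u / ((a - r*u)^2 - r^4/4)^2 ≤ CH)
    (hInt : IntegrableOn (fun u => (a - r*u)^n * u^(2*l+1) * φ u / ((a - r*u)^2 - r^4/4)^2)
      (Set.Ioo (-Υ) Υ))
    (hbd : ∀ u, -Υ ≤ u → u < Υ →
      |(a - r*u)^n * u^(2*l+1) * φ u / ((a - r*u)^2 - r^4/4)^2| ≤ B^n * Υ^(2*l+1) * CH) :
    (2*(Υ/4)*(min (2*α*(β*α)) (ξ*α*(β*α)))*(Υ/4)^(2*l+1)*δ/(B^4*B^4)*(Υ/4)) * r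
      ≤ (∫ u in Set.Ioo (-Υ) Υ, (a - r*u)^n * u^(2*l+1) * φ u / ((a - r*u)^2 - r^4/4)^2) ∧
    (∫ u in Set.Ioo (-Υ) Υ, (a - r*u)^n * u^(2*l+1) * φ u / ((a - r*u)^2 - r^4/4)^2)
      ≤ (2*Υ*(4*B^3+3*B^4)*Υ^(2*l+1)*CH/((β*α)^2)*Υ) * r := by
  set m := 2*l+1 with hmdef
  set F := fun u : ℝ => (a - r*u)^n * u^m * φ u / ((a - r*u)^2 - r^4/4)^2 with hFdef
  have hFmeas : Measurable F := by fun_prop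
  have hodd : Odd m := ⟨l, by rw [hmdef]⟩
  have key : ∫ u in Set.Ioo (-Υ) Υ, F u = ∫ u in Set.Ioo 0 Υ, (F (-u) + F u) := by
    have hi1 : IntervalIntegrable F volume (-Υ) 0 := by
      rw [intervalIntegrable_iff_integrableOn_Ioc_of_le (by linarith)]
      exact hInt.mono_set (fun u hu => ⟨hu.1, lt_of_le_of_lt hu.2 hΥ⟩)
    have hi2 : IntervalIntegrable F volume 0 Υ := by
      rw [intervalIntegrable_iff_integrableOn_Ioc_of_le hΥ.le,
        integrableOn_Ioc_iff_integrableOn_Ioo]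
      exact hInt.mono_set (Set.Ioo_subset_Ioo (by linarith) le_rfl)
    have hnegInt : IntervalIntegrable (fun u => F (-u)) volume 0 Υ := by
      rw [intervalIntegrable_iff_integrableOn_Ioc_of_le hΥ.le,
        integrableOn_Ioc_iff_integrableOn_Ioo]
      apply bddIntOn (C := B^n * Υ^m * CH) (hFmeas.comp measurable_neg)
      intro u hu
      exact hbd (-u) (by linarith [hu.2]) (by linarith [hu.1])
    have hcn : (∫ u in (0:ℝ)..Υ, F (-u)) = ∫ u in (-Υ)..(0:ℝ), F u := by
      have h := intervalIntegral.integral_comp_neg (a := (0:ℝ)) (b := Υ) F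
      simpa using h
    calc ∫ u in Set.Ioo (-Υ) Υ, F u
        = ∫ u in Set.Ioc (-Υ) Υ, F u := integral_Ioc_eq_integral_Ioo.symm
      _ = ∫ u in (-Υ)..Υ, F u := (intervalIntegral.integral_of_le (by linarith)).symm
      _ = (∫ u in (-Υ)..(0:ℝ), F u) + ∫ u in (0:ℝ)..Υ, F u :=
          (intervalIntegral.integral_add_adjacent_intervals hi1 hi2).symm
      _ = (∫ u in (0:ℝ)..Υ, F (-u)) + ∫ u in (0:ℝ)..Υ, F u := by rw [hcn]
      _ = ∫ u in (0:ℝ)..Υ, (F (-u) + F u) :=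
          (intervalIntegral.integral_add hnegInt hi2).symm
      _ = ∫ u in Set.Ioc 0 Υ, (F (-u) + F u) := intervalIntegral.integral_of_le hΥ.le
      _ = ∫ u in Set.Ioo 0 Υ, (F (-u) + F u) := integral_Ioc_eq_integral_Ioo
  have hpt : ∀ u, 0 < u → u < Υ →
      (0 ≤ F (-u) + F u) ∧
      (F (-u) + F u ≤ (2*Υ*(4*B^3+3*B^4)*Υ^m*CH/((β*α)^2)) * r) ∧
      (Υ/4 ≤ u → u ≤ Υ/2 →
        (2*(Υ/4)*(min (2*α*(β*α)) (ξ*α*(β*α)))*(Υ/4)^m*δ/(B^4*B^4)) * r ≤ F (-u) + F u) := by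
    intro u hu0 huΥ
    have hFneg : F (-u) = -((a + r*u)^n * u^m * φ u / ((a + r*u)^2 - r^4/4)^2) := by
      simp only [hFdef]
      rw [heven, hodd.neg_pow]
      ring
    have hFu : F u = (a - r*u)^n * u^m * φ u / ((a - r*u)^2 - r^4/4)^2 := rfl
    rw [hFneg, hFu]
    have h := aux_pt a r u Υ α β ξ B CH δ (φ u) n m hn hr hΥ hu0 huΥ hα hβ hξ hB hCH
      hδpos haα haB ha1 hξa hβa (hpos u) (hCHb u (by linarith) huΥ)
    exact ⟨h.1, h.2.1, fun h14 h12 => h.2.2 h14 h12 (hδ u ⟨h14, h12⟩)⟩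
  have hGmeas : Measurable fun u => F (-u) + F u :=
    (hFmeas.comp measurable_neg).add hFmeas
  have hGint : IntegrableOn (fun u => F (-u) + F u) (Set.Ioo 0 Υ) := by
    apply bddIntOn (C := 2*(B^n * Υ^m * CH)) hGmeas
    intro u hu
    calc |F (-u) + F u| ≤ |F (-u)| + |F u| := abs_add_le _ _
      _ ≤ B^n * Υ^m * CH + B^n * Υ^m * CH := by
          gcongr
          · exact hbd (-u) (by linarith [hu.2]) (by linarith [hu.1])
          · exact hbd u (by linarith [hu.1]) hu.2
      _ = 2*(B^n * Υ^m * CH) := by ring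
  rw [key]
  constructor
  · have h1 : ∫ u in Set.Ioo (Υ/4) (Υ/2), (F (-u) + F u)
        ≤ ∫ u in Set.Ioo 0 Υ, (F (-u) + F u) := by
      apply setIntegral_mono_set hGint
      · rw [Filter.EventuallyLE, ae_restrict_iff' measurableSet_Ioo]
        exact Filter.Eventually.of_forall fun u hu => (hpt u hu.1 hu.2).1
      · exact (Set.Ioo_subset_Ioo (by linarith) (by linarith)).eventuallyLE
    have h2 : ((2*(Υ/4)*(min (2*α*(β*α)) (ξ*α*(β*α)))*(Υ/4)^m*δ/(B^4*B^4)) * r) * (Υ/2 - Υ/4)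
        ≤ ∫ u in Set.Ioo (Υ/4) (Υ/2), (F (-u) + F u) := by
      apply const_le_integral_Ioo (by linarith)
        (hGint.mono_set (Set.Ioo_subset_Ioo (by linarith) (by linarith)))
      intro u hu
      exact (hpt u (by linarith [hu.1]) (by linarith [hu.2])).2.2 hu.1.le hu.2.le
    calc (2*(Υ/4)*(min (2*α*(β*α)) (ξ*α*(β*α)))*(Υ/4)^(2*l+1)*δ/(B^4*B^4)*(Υ/4)) * r
        = ((2*(Υ/4)*(min (2*α*(β*α)) (ξ*α*(β*α)))*(Υ/4)^m*δ/(B^4*B^4)) * r) * (Υ/2 - Υ/4) := by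
          rw [hmdef]; ring
      _ ≤ _ := h2.trans h1
  · have h3 : ∫ u in Set.Ioo 0 Υ, (F (-u) + F u)
        ≤ ((2*Υ*(4*B^3+3*B^4)*Υ^m*CH/((β*α)^2)) * r) * (Υ - 0) :=
      integral_Ioo_le_const hΥ.le hGint fun u hu => (hpt u hu.1 hu.2).2.1
    calc ∫ u in Set.Ioo 0 Υ, (F (-u) + F u)
        ≤ ((2*Υ*(4*B^3+3*B^4)*Υ^m*CH/((β*α)^2)) * r) * (Υ - 0) := h3
      _ = (2*Υ*(4*B^3+3*B^4)*Υ^(2*l+1)*CH/((β*α)^2)*Υ) * r := by rw [hmdef]; ring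


end Aux

theorem stmt13 (Υ : ℝ) (hΥ : 0 < Υ) (φ : ℝ → ℝ)
    (hpos : ∀ u : ℝ, 0 ≤ φ u)
    (heven : ∀ u : ℝ, φ (-u) = φ u)
    (hcont : Continuous φ)
    (hppos : ∀ u : ℝ, |u| < Υ → 0 < φ u)
    (hsupp : ∀ u : ℝ, Υ ≤ |u| → φ u = 0)
    (N₁ : ℝ) (hN₁ : 2 ≤ N₁)
    (hlim : ∃ L : ℝ, 0 < L ∧
      Filter.Tendsto (fun u : ℝ => φ u / (Υ - u) ^ N₁)
        (nhdsWithin Υ (Set.Iio Υ)) (nhds L))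
    (κ₀ : ℝ) (hκ₀pos : 0 < κ₀)
    (hκ₀ : κ₀ ^ 2 = (1 / 2) *
      ∫ u in Set.Ioo (-Υ) Υ, φ u / ((Υ - u) * (Υ + κ₀ - u)))
    (τstar : ℝ → ℝ)
    (hτ0 : τstar 0 = Real.sqrt (2 * ∫ u : ℝ, φ u))
    (hτ : ∀ r : ℝ, 0 < r → r ≤ κ₀ →
      2 * r * Υ + r ^ 2 ≤ τstar r ∧
      (∫ u in Set.Ioo (-Υ) Υ,
        φ u / ((τstar r / 2 - r * u) ^ 2 - r ^ 4 / 4)) = 2) :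
    (∀ n : ℕ, n ≤ 1 → ∀ m : ℕ, ∀ r : ℝ, 0 ≤ r → r ≤ κ₀ →
      IntegrableOn (fun u : ℝ =>
        (τstar r / 2 - r * u) ^ n * u ^ m * φ u /
          ((τstar r / 2 - r * u) ^ 2 - r ^ 4 / 4) ^ 2) (Set.Ioo (-Υ) Υ)) ∧
    (∀ l : ℕ, ∀ n : ℕ, n ≤ 1 →
      ∃ c₀ C₀ : ℝ, 0 < c₀ ∧ 0 < C₀ ∧
        ∀ r : ℝ, 0 ≤ r → r ≤ κ₀ →
          (c₀ ≤ Ifun φ Υ τstar n (2 * l) r ∧ Ifun φ Υ τstar n (2 * l) r ≤ C₀) ∧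
          (c₀ * r ≤ Ifun φ Υ τstar n (2 * l + 1) r ∧
            Ifun φ Υ τstar n (2 * l + 1) r ≤ C₀ * r)) := by
  obtain ⟨L, hLpos, hL⟩ := hlim
  -- maximum of φ
  obtain ⟨u₁, hu₁mem, hu₁⟩ := isCompact_Icc.exists_isMaxOn (s := Set.Icc (-Υ) Υ)
    ⟨0, by constructor <;> linarith⟩ hcont.continuousOn
  set Φmax := φ u₁ with hΦdef
  have hΦmax : ∀ u, -Υ ≤ u → u ≤ Υ → φ u ≤ Φmax := fun u h1 h2 => hu₁ ⟨h1, h2⟩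
  have hΦpos : 0 < Φmax :=
    lt_of_lt_of_le (hppos 0 (by simpa using hΥ)) (hΦmax 0 (by linarith) hΥ.le)
  -- quadratic decay constant K₂
  have hK2ex : ∃ K₂ : ℝ, 0 < K₂ ∧ ∀ u, -Υ ≤ u → u ≤ Υ → φ u ≤ K₂ * (Υ - u)^2 := by
    have hev : ∀ᶠ u in nhdsWithin Υ (Set.Iio Υ), φ u / (Υ - u) ^ N₁ < L + 1 :=
      hL.eventually (eventually_lt_nhds (by linarith))
    rw [Filter.eventually_iff, Metric.mem_nhdsWithin_iff] at hev
    obtain ⟨ε, hε, hball⟩ := hev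
    set ε' := min (min ε 1) Υ with hε'def
    have hε'pos : 0 < ε' := lt_min (lt_min hε one_pos) hΥ
    have hε'1 : ε' ≤ 1 := le_trans (min_le_left _ _) (min_le_right _ _)
    have hε'ε : ε' ≤ ε := le_trans (min_le_left _ _) (min_le_left _ _)
    refine ⟨(L + 1) + Φmax / ε' ^ 2, by positivity, fun u h1 h2 => ?_⟩
    rcases lt_or_ge (Υ - u) ε' with hc | hc
    · rcases eq_or_lt_of_le h2 with rfl | h2'
      · have : φ u = 0 := hsupp u (by rw [abs_of_pos hΥ])
        simp only [this, sub_self]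
        positivity
      · have hmem : u ∈ Metric.ball Υ ε ∩ Set.Iio Υ := by
          constructor
          · rw [Metric.mem_ball, Real.dist_eq, abs_of_neg (by linarith : u - Υ < 0)]
            linarith
          · exact h2'
        have hlt : φ u / (Υ - u) ^ N₁ < L + 1 := hball hmem
        have hbpos : (0:ℝ) < Υ - u := by linarith
        have hpow : (0:ℝ) < (Υ - u) ^ N₁ := Real.rpow_pos_of_pos hbpos _
        have h3 : φ u < (L + 1) * (Υ - u) ^ N₁ := by
          rw [div_lt_iff₀ hpow] at hlt; linarith [hlt]
        have h4 : (Υ - u) ^ N₁ ≤ (Υ - u) ^ (2:ℝ) :=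
          Real.rpow_le_rpow_of_exponent_ge hbpos (by linarith) hN₁
        have h5 : (Υ - u) ^ (2:ℝ) = (Υ - u) ^ (2:ℕ) := by
          rw [← Real.rpow_natCast]; norm_num
        have h6 : φ u ≤ (L + 1) * (Υ - u) ^ 2 := by
          rw [← h5]; nlinarith [h3, h4]
        nlinarith [sq_nonneg (Υ - u), div_nonneg hΦpos.le (sq_nonneg ε'), h6]
    · have h7 : φ u ≤ Φmax := hΦmax u h1 h2
      have h8 : ε' ^ 2 ≤ (Υ - u) ^ 2 := by nlinarith
      have h9 : Φmax = (Φmax / ε' ^ 2) * ε' ^ 2 := by field_simp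
      nlinarith [mul_le_mul_of_nonneg_left h8 (div_nonneg hΦpos.le (sq_nonneg ε')),
        sq_nonneg (Υ - u), hLpos]
  obtain ⟨K₂, hK₂pos, hK₂⟩ := hK2ex
  -- minimum of φ on [Υ/4, Υ/2]
  obtain ⟨u₂, hu₂mem, hu₂⟩ := isCompact_Icc.exists_isMinOn (s := Set.Icc (Υ/4) (Υ/2))
    ⟨Υ/4, by constructor <;> linarith⟩ hcont.continuousOn
  set δ := φ u₂ with hδdef
  have hδ : ∀ u ∈ Set.Icc (Υ/4) (Υ/2), δ ≤ φ u := fun u hu => hu₂ hu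
  have hδpos : 0 < δ := hppos u₂ (abs_lt.2 ⟨by linarith [hu₂mem.1], by linarith [hu₂mem.2]⟩)
  -- integrability of φ and the constant M
  have hφsupp : HasCompactSupport φ := by
    apply HasCompactSupport.intro (isCompact_Icc (a := -Υ) (b := Υ))
    intro u hu
    apply hsupp
    simp only [Set.mem_Icc, not_and_or, not_le] at hu
    rcases hu with h | h
    · rw [abs_of_neg (by linarith)]; linarith
    · rw [abs_of_pos (by linarith)]; linarith
  have hφint : Integrable φ := hcont.integrable_of_hasCompactSupport hφsupp
  set M := ∫ u, φ u with hMdef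
  have hMIoo : ∫ u in Set.Ioo (-Υ) Υ, φ u = M := by
    apply setIntegral_eq_integral_of_forall_compl_eq_zero
    intro u hu
    apply hsupp
    simp only [Set.mem_Ioo, not_and_or, not_lt] at hu
    rcases hu with h | h
    · rw [abs_of_nonpos (by linarith)]; linarith
    · rw [abs_of_pos (by linarith)]; exact h
  have hMpos : 0 < M := by
    rw [← hMIoo]
    have h1 : δ * (Υ/2 - Υ/4) ≤ ∫ u in Set.Ioo (Υ/4) (Υ/2), φ u := by
      apply const_le_integral_Ioo (by linarith) (hφint.integrableOn)
      exact fun u hu => hδ u ⟨hu.1.le, hu.2.le⟩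
    have h2 : ∫ u in Set.Ioo (Υ/4) (Υ/2), φ u ≤ ∫ u in Set.Ioo (-Υ) Υ, φ u := by
      apply setIntegral_mono_set hφint.integrableOn
        (Filter.Eventually.of_forall fun u => hpos u)
      exact (Set.Ioo_subset_Ioo (by linarith) (by linarith)).eventuallyLE
    nlinarith
  -- value at r = 0
  have hsqM : Real.sqrt (M/2)^2 = M/2 := Real.sq_sqrt (by positivity)
  have hs2pos : 0 < Real.sqrt (M/2) := Real.sqrt_pos.2 (by positivity)
  have h2M : Real.sqrt (2*M) = 2*Real.sqrt (M/2) := by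
    rw [show (2:ℝ)*M = 2^2*(M/2) by ring,
      Real.sqrt_mul (by norm_num : (0:ℝ) ≤ 2^2) (M/2),
      Real.sqrt_sq (by norm_num : (0:ℝ) ≤ 2)]
  have ha0 : τstar 0 / 2 = Real.sqrt (M/2) := by
    rw [hτ0, h2M]; ring
  -- the global constants
  set α := Real.sqrt (M/2)/2 with hαdef
  have hαpos : 0 < α := by positivity
  set ξ := min (α/2) (α^2/(8*Υ^2)) with hξdef
  have hξpos : 0 < ξ := lt_min (by positivity) (by positivity)
  set β := min (α/2) (Real.sqrt α * Υ) with hβdef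
  have hβpos : 0 < β := lt_min (by positivity) (mul_pos (Real.sqrt_pos.2 hαpos) hΥ)
  set B := 2*κ₀*Υ + κ₀^2/2 + Real.sqrt (M/2) with hBdef
  have hBpos : 0 < B := by positivity
  set CH := max (4*Φmax/ξ^4) (K₂/ξ^3) with hCHdef
  have hCHpos : 0 < CH :=
    lt_of_lt_of_le (by positivity) (le_max_left (4*Φmax/ξ^4) (K₂/ξ^3))
  -- bounds on the dispersion curve
  have hτb : ∀ r, 0 ≤ r → r ≤ κ₀ → (r*Υ + r^2/2 ≤ τstar r/2) ∧
      (M/2 ≤ (τstar r/2 + r*Υ)^2) ∧ ((τstar r/2 - r*Υ)^2 - r^4/4 ≤ M/2) := by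
    intro r hr hκ
    rcases eq_or_lt_of_le hr with h0 | h0
    · have hr0 : r = 0 := h0.symm
      subst hr0
      rw [ha0]
      refine ⟨by nlinarith [Real.sqrt_nonneg (M/2)], by nlinarith [hsqM],
        by nlinarith [hsqM]⟩
    · obtain ⟨ht1, ht2⟩ := hτ r h0 hκ
      have ha1 : r*Υ + r^2/2 ≤ τstar r/2 := by linarith
      have hd := aux_disp Υ hΥ φ hpos hcont.measurable K₂ M hK₂ hK₂pos hφint hMIoo
        hMpos (τstar r / 2) r h0 ha1 ht2
      exact ⟨ha1, hd.1, hd.2⟩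
  have hcst : ∀ r, 0 ≤ r → r ≤ κ₀ → α ≤ τstar r/2 ∧ τstar r/2 + r*Υ ≤ B ∧
      ξ ≤ τstar r/2 - r*Υ ∧ β ≤ τstar r/2 - r^2/2 := by
    intro r hr hκ
    obtain ⟨h1, h2, h3⟩ := hτb r hr hκ
    exact aux_consts Υ M (τstar r/2) r κ₀ hΥ hMpos hr hκ hκ₀pos h1 h2 h3
  have hxfacts : ∀ r, 0 ≤ r → r ≤ κ₀ →
      (∀ u, -Υ ≤ u → u ≤ Υ → ξ ≤ τstar r/2 - r*u) ∧
      (∀ u, -Υ ≤ u → u ≤ Υ → τstar r/2 - r*u ≤ B) ∧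
      (∀ u, -Υ ≤ u → u ≤ Υ → (τstar r/2 - r*u)^2 - r^4/4 ≤ B^2) ∧
      (∀ u, -Υ ≤ u → u ≤ Υ/2 → 0 < (τstar r/2 - r*u)^2 - r^4/4) ∧
      (∀ u, -Υ ≤ u → u < Υ →
        φ u / ((τstar r/2 - r*u)^2 - r^4/4)^2 ≤ CH) := by
    intro r hr hκ
    obtain ⟨hc1, hc2, hc3, hc4⟩ := hcst r hr hκ
    exact aux_x Υ (τstar r/2) r ξ B K₂ Φmax hΥ hξpos hBpos hK₂pos hΦpos hr
      (hτb r hr hκ).1 hc3 hc2 φ hpos hΦmax hK₂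
  -- Part 1 : integrability with uniform bound
  have hIntAll : ∀ n m : ℕ, ∀ r : ℝ, 0 ≤ r → r ≤ κ₀ →
      IntegrableOn (fun u : ℝ => (τstar r/2 - r*u)^n * u^m * φ u /
        ((τstar r/2 - r*u)^2 - r^4/4)^2) (Set.Ioo (-Υ) Υ) ∧
      ∀ u, -Υ ≤ u → u < Υ →
        |(τstar r/2 - r*u)^n * u^m * φ u / ((τstar r/2 - r*u)^2 - r^4/4)^2|
          ≤ B^n * Υ^m * CH := by
    intro n m r hr hκ
    obtain ⟨hx1, hx2, hx3, hx4, hx5⟩ := hxfacts r hr hκ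
    exact aux_int Υ hΥ φ hpos hcont.measurable (τstar r/2) r ξ B CH hξpos hBpos
      hCHpos.le n m hx1 hx2 hx5
  refine ⟨fun n _ m r hr hκ => (hIntAll n m r hr hκ).1, ?_⟩
  -- Part 2 : two-sided bounds
  intro l n hn
  have hΥ4 : (0:ℝ) < Υ/4 := by linarith
  have hB4 : (0:ℝ) < B^4 := pow_pos hBpos 4
  have hρpos : 0 < min (2*α*(β*α)) (ξ*α*(β*α)) :=
    lt_min (mul_pos (mul_pos (by norm_num : (0:ℝ) < 2) hαpos) (mul_pos hβpos hαpos))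
      (mul_pos (mul_pos hξpos hαpos) (mul_pos hβpos hαpos))
  have hPpos : (0:ℝ) < 4*B^3 + 3*B^4 := by positivity
  have hcE : 0 < ξ^n * (Υ/4)^(2*l) * δ / B^4 * (Υ/4) :=
    mul_pos (div_pos (mul_pos (mul_pos (pow_pos hξpos n) (pow_pos hΥ4 (2*l))) hδpos)
      hB4) hΥ4
  have hCE : 0 < B^n * Υ^(2*l) * CH * (2*Υ) :=
    mul_pos (mul_pos (mul_pos (pow_pos hBpos n) (pow_pos hΥ (2*l))) hCHpos)
      (by linarith)
  have hcO : 0 < 2*(Υ/4)*(min (2*α*(β*α)) (ξ*α*(β*α)))*(Υ/4)^(2*l+1)*δ/(B^4*B^4)*(Υ/4) :=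
    mul_pos (div_pos (mul_pos (mul_pos (mul_pos (mul_pos (by norm_num : (0:ℝ) < 2) hΥ4)
      hρpos) (pow_pos hΥ4 (2*l+1))) hδpos) (mul_pos hB4 hB4)) hΥ4
  have hCO : 0 < 2*Υ*(4*B^3+3*B^4)*Υ^(2*l+1)*CH/((β*α)^2)*Υ :=
    mul_pos (div_pos (mul_pos (mul_pos (mul_pos (mul_pos (by norm_num : (0:ℝ) < 2) hΥ)
      hPpos) (pow_pos hΥ (2*l+1))) hCHpos) (pow_pos (mul_pos hβpos hαpos) 2)) hΥ
  refine ⟨min (ξ^n * (Υ/4)^(2*l) * δ / B^4 * (Υ/4))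
      (2*(Υ/4)*(min (2*α*(β*α)) (ξ*α*(β*α)))*(Υ/4)^(2*l+1)*δ/(B^4*B^4)*(Υ/4)),
    max (B^n * Υ^(2*l) * CH * (2*Υ)) (2*Υ*(4*B^3+3*B^4)*Υ^(2*l+1)*CH/((β*α)^2)*Υ),
    lt_min hcE hcO, lt_of_lt_of_le hCE (le_max_left _ _), fun r hr hκ => ?_⟩
  obtain ⟨hx1, hx2, hx3, hx4, hx5⟩ := hxfacts r hr hκ
  obtain ⟨hc1, hc2, hc3, hc4⟩ := hcst r hr hκ
  have hEven := aux_even Υ hΥ φ hpos (τstar r/2) r ξ B CH δ hξpos hBpos hCHpos.le n l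
    hx1 hx2 hδ hδpos hx3 hx4 (hIntAll n (2*l) r hr hκ).1 (hIntAll n (2*l) r hr hκ).2
  have hOdd := aux_odd Υ hΥ φ hpos heven hcont.measurable (τstar r/2) r α β ξ B CH δ
    hr hαpos hβpos hξpos hBpos hCHpos.le hδpos n hn l hc1 hc2 (hτb r hr hκ).1 hc3 hc4
    hδ hx5 (hIntAll n (2*l+1) r hr hκ).1 (hIntAll n (2*l+1) r hr hκ).2
  have hIe : Ifun φ Υ τstar n (2*l) r = ∫ u in Set.Ioo (-Υ) Υ,
      (τstar r/2 - r*u)^n * u^(2*l) * φ u / ((τstar r/2 - r*u)^2 - r^4/4)^2 := rfl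
  have hIo : Ifun φ Υ τstar n (2*l+1) r = ∫ u in Set.Ioo (-Υ) Υ,
      (τstar r/2 - r*u)^n * u^(2*l+1) * φ u / ((τstar r/2 - r*u)^2 - r^4/4)^2 := rfl
  refine ⟨⟨?_, ?_⟩, ?_, ?_⟩
  · rw [hIe]
    exact le_trans (min_le_left _ _) hEven.1
  · rw [hIe]
    exact le_trans hEven.2 (le_max_left _ _)
  · rw [hIo]
    refine le_trans (mul_le_mul_of_nonneg_right (min_le_right _ _) hr) hOdd.1
  · rw [hIo]
    exact le_trans hOdd.2 (mul_le_mul_of_nonneg_right (le_max_right _ _) hr)
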